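/- Let H(z) ∈ ℂ[z_1,...,z_n]^n and define P_H(u,v) = Σ_{i=1}^n v_i·H_i(u_1+iv_1,...,u_n+iv_n) ∈ ℂ[u_1,...,u_n,v_1,...,v_n], where i = √-1. Then P_H is Hessian nilpotent (as a polynomial in the 2n variables (u,v)) if and only if the Jacobian matrix JH(z) = (∂H_i/∂z_j) is nilpotent over ℂ[z]. -/

import Mathlib

open MvPolynomial Matrix

/-- The Hessian matrix of a polynomial in variables indexed by `σ`. -/
noncomputable def hess {σ : Type*} [Fintype σ] [DecidableEq σ]
    (P : MvPolynomial σ ℂ) : Matrix σ σ (MvPolynomial σ ℂ) :=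
  Matrix.of fun i j => pderiv i (pderiv j P)

/-- de Bondt--van den Essen polynomial `P_H(u,v) = ∑ v_i H_i(u + √-1 v)`, where
`Sum.inl` indexes the `u`-variables and `Sum.inr` the `v`-variables. -/
noncomputable def PH {n : ℕ} (H : Fin n → MvPolynomial (Fin n) ℂ) :
    MvPolynomial (Fin n ⊕ Fin n) ℂ :=
  ∑ i, X (Sum.inr i) *
    aeval (fun j : Fin n => X (Sum.inl j) + C Complex.I * X (Sum.inr j)) (H i)

/-! ### Generic matrix helper lemmas -/

section Helpers

variable {R : Type*} [CommRing R]

private lemma myConjPow {A : Type*} [Ring A] (t t' m : A) (h2 : t' * t = 1) (k : ℕ) :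
    (t * m * t') ^ k * t = t * m ^ k := by
  induction k with
  | zero => simp
  | succ k ih =>
    calc (t * m * t') ^ (k+1) * t = (t * m * t') ^ k * (t * m * (t' * t)) := by
          rw [pow_succ]; noncomm_ring
      _ = ((t * m * t') ^ k * t) * m := by rw [h2]; noncomm_ring
      _ = t * m ^ (k+1) := by rw [ih, pow_succ]; noncomm_ring

private lemma isNilpotent_conj_iff {A : Type*} [Ring A] (t t' m : A)
    (h1 : t * t' = 1) (h2 : t' * t = 1) :
    IsNilpotent (t * m * t') ↔ IsNilpotent m := by
  constructor
  · rintro ⟨k, hk⟩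
    refine ⟨k, ?_⟩
    have := myConjPow t t' m h2 k
    rw [hk, zero_mul] at this
    have := congrArg (fun x => t' * x) this.symm
    simpa [← mul_assoc, h2] using this
  · rintro ⟨k, hk⟩
    refine ⟨k, ?_⟩
    have := myConjPow t t' m h2 k
    rw [hk, mul_zero] at this
    have h3 : (t * m * t') ^ k * (t * t') = 0 := by
      rw [← mul_assoc, this, zero_mul]
    rwa [h1, mul_one] at h3

variable {p q : Type*} [Fintype p] [Fintype q] [DecidableEq p] [DecidableEq q]

private lemma fromBlocks_triangular_pow (X : Matrix p p R) (Y : Matrix p q R) (Z : Matrix q q R)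
    (k : ℕ) : ∃ W, (Matrix.fromBlocks X Y 0 Z) ^ k = Matrix.fromBlocks (X ^ k) W 0 (Z ^ k) := by
  induction k with
  | zero => exact ⟨0, by simp [← Matrix.fromBlocks_one]⟩
  | succ k ih =>
    obtain ⟨W, hW⟩ := ih
    refine ⟨X ^ k * Y + W * Z, ?_⟩
    rw [pow_succ, hW, Matrix.fromBlocks_multiply]
    simp [pow_succ]

private lemma isNilpotent_fromBlocks_iff (X : Matrix p p R) (Y : Matrix p q R)
    (Z : Matrix q q R) :
    IsNilpotent (Matrix.fromBlocks X Y 0 Z) ↔ IsNilpotent X ∧ IsNilpotent Z := by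
  constructor
  · rintro ⟨k, hk⟩
    obtain ⟨W, hW⟩ := fromBlocks_triangular_pow X Y Z k
    rw [hW] at hk
    constructor
    · exact ⟨k, by simpa [show Matrix.toBlocks₁₁ (0 : Matrix (p ⊕ q) (p ⊕ q) R) = 0 by ext; rfl] using congrArg Matrix.toBlocks₁₁ hk⟩
    · exact ⟨k, by simpa [show Matrix.toBlocks₂₂ (0 : Matrix (p ⊕ q) (p ⊕ q) R) = 0 by ext; rfl] using congrArg Matrix.toBlocks₂₂ hk⟩
  · rintro ⟨⟨a, ha⟩, ⟨b, hb⟩⟩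
    refine ⟨a + b, ?_⟩
    obtain ⟨Wa, hWa⟩ := fromBlocks_triangular_pow X Y Z a
    obtain ⟨Wb, hWb⟩ := fromBlocks_triangular_pow X Y Z b
    rw [pow_add, hWa, hWb, ha, hb, Matrix.fromBlocks_multiply]
    simp

private lemma isNilpotent_unit_smul_iff (c c' : R) (h : c' * c = 1) (M : Matrix p p R) :
    IsNilpotent (c • M) ↔ IsNilpotent M := by
  constructor
  · rintro ⟨k, hk⟩
    refine ⟨k, ?_⟩
    rw [smul_pow] at hk
    have := congrArg (fun x => c' ^ k • x) hk
    simpa [smul_smul, ← mul_pow, h] using this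
  · rintro ⟨k, hk⟩
    exact ⟨k, by rw [smul_pow, hk, smul_zero]⟩

private lemma isNilpotent_transpose_iff (M : Matrix p p R) :
    IsNilpotent Mᵀ ↔ IsNilpotent M := by
  constructor
  · rintro ⟨k, hk⟩
    refine ⟨k, ?_⟩
    have := congrArg Matrix.transpose hk
    rwa [← Matrix.transpose_pow, Matrix.transpose_transpose, Matrix.transpose_zero] at this
  · rintro ⟨k, hk⟩
    exact ⟨k, by rw [← Matrix.transpose_pow, hk, Matrix.transpose_zero]⟩

private lemma isNilpotent_map_iff {S : Type*} [CommRing S] (f : R →+* S)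
    (hf : Function.Injective f) (M : Matrix p p R) :
    IsNilpotent (M.map f) ↔ IsNilpotent M := by
  constructor
  · rintro ⟨k, hk⟩
    refine ⟨k, ?_⟩
    have h1 : f.mapMatrix (M ^ k) = 0 := by
      rw [map_pow]; simpa [RingHom.mapMatrix_apply] using hk
    ext i j
    have h2 : (f.mapMatrix (M ^ k)) i j = (0 : Matrix p p S) i j := by rw [h1]
    simp only [RingHom.mapMatrix_apply, Matrix.map_apply, Matrix.zero_apply] at h2
    exact hf (by simpa using h2)
  · rintro ⟨k, hk⟩
    refine ⟨k, ?_⟩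
    have : (f.mapMatrix M) ^ k = 0 := by rw [← map_pow, hk, map_zero]
    simpa [RingHom.mapMatrix_apply] using this

end Helpers

/-! ### The substitution `z ↦ u + i v` and its interaction with `pderiv` -/

noncomputable def emb (n : ℕ) : MvPolynomial (Fin n) ℂ →ₐ[ℂ] MvPolynomial (Fin n ⊕ Fin n) ℂ :=
  aeval (fun j : Fin n => X (Sum.inl j) + C Complex.I * X (Sum.inr j))

lemma emb_X {n : ℕ} (j : Fin n) :
    emb n (X j) = X (Sum.inl j) + C Complex.I * X (Sum.inr j) := aeval_X _ j

lemma emb_injective (n : ℕ) : Function.Injective (emb n) := by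
  have h : ∀ p : MvPolynomial (Fin n) ℂ,
      aeval (Sum.elim X (fun _ : Fin n => (0 : MvPolynomial (Fin n) ℂ))) (emb n p) = p := by
    intro p
    rw [emb, ← AlgHom.comp_apply, comp_aeval]
    simp
  intro a b hab
  have ha := h a
  rw [hab, h b] at ha
  exact ha.symm

lemma pd_f_inl {n : ℕ} (k j : Fin n) :
    pderiv (Sum.inl k) (X (Sum.inl j) + C Complex.I * X (Sum.inr j) :
      MvPolynomial (Fin n ⊕ Fin n) ℂ) = if j = k then 1 else 0 := by
  by_cases h : j = k
  · subst h
    simp [pderiv_X_self, pderiv_C_mul,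
      pderiv_X_of_ne (show (Sum.inr j : Fin n ⊕ Fin n) ≠ Sum.inl j by simp)]
  · simp [h, pderiv_C_mul,
      pderiv_X_of_ne (show (Sum.inl j : Fin n ⊕ Fin n) ≠ Sum.inl k by simpa),
      pderiv_X_of_ne (show (Sum.inr j : Fin n ⊕ Fin n) ≠ Sum.inl k by simp)]

lemma pd_f_inr {n : ℕ} (k j : Fin n) :
    pderiv (Sum.inr k) (X (Sum.inl j) + C Complex.I * X (Sum.inr j) :
      MvPolynomial (Fin n ⊕ Fin n) ℂ) = if j = k then C Complex.I else 0 := by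
  by_cases h : j = k
  · subst h
    simp [pderiv_X_self, pderiv_C_mul,
      pderiv_X_of_ne (show (Sum.inl j : Fin n ⊕ Fin n) ≠ Sum.inr j by simp)]
  · simp [h, pderiv_C_mul,
      pderiv_X_of_ne (show (Sum.inr j : Fin n ⊕ Fin n) ≠ Sum.inr k by simpa),
      pderiv_X_of_ne (show (Sum.inl j : Fin n ⊕ Fin n) ≠ Sum.inr k by simp)]

lemma pderiv_emb_inl {n : ℕ} (k : Fin n) (p : MvPolynomial (Fin n) ℂ) :
    pderiv (Sum.inl k) (emb n p) = emb n (pderiv k p) := by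
  induction p using MvPolynomial.induction_on with
  | C a => simp [emb]
  | add p q hp hq => simp only [map_add, hp, hq]
  | mul_X p j hp =>
    rw [_root_.map_mul, pderiv_mul, hp, emb_X, pd_f_inl, pderiv_mul, _root_.map_add, _root_.map_mul, _root_.map_mul, emb_X]
    by_cases h : j = k <;> simp [h, pderiv_X_self, pderiv_X_of_ne]

lemma pderiv_emb_inr {n : ℕ} (k : Fin n) (p : MvPolynomial (Fin n) ℂ) :
    pderiv (Sum.inr k) (emb n p) = C Complex.I * emb n (pderiv k p) := by
  induction p using MvPolynomial.induction_on with
  | C a => simp [emb]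
  | add p q hp hq => simp only [map_add, hp, hq]; ring
  | mul_X p j hp =>
    rw [_root_.map_mul, pderiv_mul, hp, emb_X, pd_f_inr, pderiv_mul, _root_.map_add, _root_.map_mul, _root_.map_mul, emb_X]
    by_cases h : j = k <;> simp [h, pderiv_X_self, pderiv_X_of_ne] <;> ring

lemma PH_eq {n : ℕ} (H : Fin n → MvPolynomial (Fin n) ℂ) :
    PH H = ∑ i, X (Sum.inr i) * emb n (H i) := rfl

lemma pderiv_inl_PH {n : ℕ} (H : Fin n → MvPolynomial (Fin n) ℂ) (k : Fin n) :
    pderiv (Sum.inl k) (PH H) = ∑ i, X (Sum.inr i) * emb n (pderiv k (H i)) := by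
  rw [PH_eq, map_sum]
  refine Finset.sum_congr rfl fun i _ => ?_
  rw [pderiv_mul, pderiv_X_of_ne (by simp), pderiv_emb_inl]
  ring

lemma pderiv_inr_PH {n : ℕ} (H : Fin n → MvPolynomial (Fin n) ℂ) (k : Fin n) :
    pderiv (Sum.inr k) (PH H) =
      emb n (H k) + C Complex.I * ∑ i, X (Sum.inr i) * emb n (pderiv k (H i)) := by
  rw [PH_eq, map_sum]
  have h : ∀ i ∈ Finset.univ, pderiv (Sum.inr k) (X (Sum.inr i) * emb n (H i)) =
      (if i = k then emb n (H i) else 0)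
        + C Complex.I * (X (Sum.inr i) * emb n (pderiv k (H i))) := by
    intro i _
    rw [pderiv_mul, pderiv_emb_inr]
    by_cases hik : i = k
    · subst hik; rw [pderiv_X_self]; simp; ring
    · rw [pderiv_X_of_ne (show (Sum.inr i : Fin n ⊕ Fin n) ≠ Sum.inr k by simpa)]
      simp [hik]; ring
  rw [Finset.sum_congr rfl h, Finset.sum_add_distrib,
    Finset.sum_ite_eq' Finset.univ k (fun i => emb n (H i)), ← Finset.mul_sum]
  simp

/-! ### Block structure of the Hessian of `PH` -/

noncomputable def Smat {n : ℕ} (H : Fin n → MvPolynomial (Fin n) ℂ) :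
    Matrix (Fin n) (Fin n) (MvPolynomial (Fin n ⊕ Fin n) ℂ) :=
  Matrix.of fun j k => ∑ i, X (Sum.inr i) * emb n (pderiv j (pderiv k (H i)))

noncomputable def Bmat {n : ℕ} (H : Fin n → MvPolynomial (Fin n) ℂ) :
    Matrix (Fin n) (Fin n) (MvPolynomial (Fin n ⊕ Fin n) ℂ) :=
  Matrix.of fun j k => emb n (pderiv k (H j))

lemma hI {n : ℕ} : (C Complex.I : MvPolynomial (Fin n ⊕ Fin n) ℂ) * C Complex.I = -1 := by
  rw [← C_mul, Complex.I_mul_I]; simp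

lemma hess_PH {n : ℕ} (H : Fin n → MvPolynomial (Fin n) ℂ) :
    hess (PH H) = Matrix.fromBlocks (Smat H)
      ((Bmat H)ᵀ + (C Complex.I : MvPolynomial (Fin n ⊕ Fin n) ℂ) • Smat H)
      (Bmat H + (C Complex.I : MvPolynomial (Fin n ⊕ Fin n) ℂ) • Smat H)
      ((C Complex.I : MvPolynomial (Fin n ⊕ Fin n) ℂ) • Bmat H
        + (C Complex.I : MvPolynomial (Fin n ⊕ Fin n) ℂ) • (Bmat H)ᵀ - Smat H) := by
  refine Matrix.ext fun i j => ?_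
  rcases i with j' | j' <;> rcases j with k | k
  · show pderiv (Sum.inl j') (pderiv (Sum.inl k) (PH H)) = Smat H j' k
    rw [pderiv_inl_PH, ← PH_eq (fun i => pderiv k (H i)), pderiv_inl_PH]
    rfl
  · show pderiv (Sum.inl j') (pderiv (Sum.inr k) (PH H))
      = ((Bmat H)ᵀ + (C Complex.I : MvPolynomial (Fin n ⊕ Fin n) ℂ) • Smat H) j' k
    rw [pderiv_inr_PH, map_add, pderiv_emb_inl, pderiv_C_mul,
      ← PH_eq (fun i => pderiv k (H i)), pderiv_inl_PH]
    simp [Smat, Bmat, Matrix.add_apply, Matrix.smul_apply, smul_eq_mul]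
  · show pderiv (Sum.inr j') (pderiv (Sum.inl k) (PH H))
      = (Bmat H + (C Complex.I : MvPolynomial (Fin n ⊕ Fin n) ℂ) • Smat H) j' k
    rw [pderiv_inl_PH, ← PH_eq (fun i => pderiv k (H i)), pderiv_inr_PH]
    simp [Smat, Bmat, Matrix.add_apply, Matrix.smul_apply, smul_eq_mul]
  · show pderiv (Sum.inr j') (pderiv (Sum.inr k) (PH H))
      = ((C Complex.I : MvPolynomial (Fin n ⊕ Fin n) ℂ) • Bmat H
        + (C Complex.I : MvPolynomial (Fin n ⊕ Fin n) ℂ) • (Bmat H)ᵀ - Smat H) j' k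
    rw [pderiv_inr_PH, map_add, pderiv_emb_inr, pderiv_C_mul,
      ← PH_eq (fun i => pderiv k (H i)), pderiv_inr_PH]
    simp only [Smat, Bmat, Matrix.sub_apply, Matrix.add_apply, Matrix.smul_apply,
      Matrix.transpose_apply, Matrix.of_apply, smul_eq_mul]
    linear_combination (∑ i : Fin n, X (Sum.inr i) * emb n (pderiv j' (pderiv k (H i)))) * hI (n := n)

/-! ### Conjugating the Hessian to block-triangular form -/

noncomputable def Tm (n : ℕ) : Matrix (Fin n ⊕ Fin n) (Fin n ⊕ Fin n)
    (MvPolynomial (Fin n ⊕ Fin n) ℂ) :=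
  Matrix.fromBlocks 1 0 ((C Complex.I : MvPolynomial (Fin n ⊕ Fin n) ℂ) • 1) 1

noncomputable def Tm' (n : ℕ) : Matrix (Fin n ⊕ Fin n) (Fin n ⊕ Fin n)
    (MvPolynomial (Fin n ⊕ Fin n) ℂ) :=
  Matrix.fromBlocks 1 0 ((C (-Complex.I) : MvPolynomial (Fin n ⊕ Fin n) ℂ) • 1) 1

lemma TmTm' (n : ℕ) : Tm n * Tm' n = 1 := by
  rw [Tm, Tm', Matrix.fromBlocks_multiply, ← Matrix.fromBlocks_one, Matrix.fromBlocks_inj]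
  refine ⟨by simp, by simp, ?_, by simp⟩
  simp only [Matrix.smul_mul, Matrix.mul_smul, Matrix.one_mul, Matrix.mul_one,
    Matrix.mul_zero, Matrix.zero_mul, add_zero, zero_add, smul_zero, ← add_smul,
    ← C_add, add_neg_cancel]
  simp

lemma Tm'Tm (n : ℕ) : Tm' n * Tm n = 1 := by
  rw [Tm, Tm', Matrix.fromBlocks_multiply, ← Matrix.fromBlocks_one, Matrix.fromBlocks_inj]
  refine ⟨by simp, by simp, ?_, by simp⟩
  simp only [Matrix.smul_mul, Matrix.mul_smul, Matrix.one_mul, Matrix.mul_one,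
    Matrix.mul_zero, Matrix.zero_mul, add_zero, zero_add, smul_zero, ← add_smul,
    ← C_add, neg_add_cancel]
  simp

noncomputable def Nm {n : ℕ} (H : Fin n → MvPolynomial (Fin n) ℂ) :
    Matrix (Fin n ⊕ Fin n) (Fin n ⊕ Fin n) (MvPolynomial (Fin n ⊕ Fin n) ℂ) :=
  Matrix.fromBlocks ((C Complex.I : MvPolynomial (Fin n ⊕ Fin n) ℂ) • (Bmat H)ᵀ)
    ((Bmat H)ᵀ + (C Complex.I : MvPolynomial (Fin n ⊕ Fin n) ℂ) • Smat H) 0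
    ((C Complex.I : MvPolynomial (Fin n ⊕ Fin n) ℂ) • Bmat H)

lemma hTriple {n : ℕ} : (C (-Complex.I) : MvPolynomial (Fin n ⊕ Fin n) ℂ) *
    (C Complex.I * C Complex.I) = C Complex.I := by
  rw [← C_mul, ← C_mul]
  simp [Complex.I_mul_I]

lemma hmI {n : ℕ} : (C (-Complex.I) : MvPolynomial (Fin n ⊕ Fin n) ℂ) * C Complex.I = 1 := by
  rw [← C_mul]; simp

lemma conj_eq {n : ℕ} (H : Fin n → MvPolynomial (Fin n) ℂ) :
    Tm n * Nm H * Tm' n = hess (PH H) := by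
  rw [hess_PH, Tm, Tm', Nm, Matrix.fromBlocks_multiply, Matrix.fromBlocks_multiply,
    Matrix.fromBlocks_inj]
  refine ⟨?_, ?_, ?_, ?_⟩ <;>
    simp only [Matrix.one_mul, Matrix.mul_one, Matrix.zero_mul, Matrix.mul_zero,
      add_zero, zero_add, smul_zero, Matrix.mul_smul, Matrix.smul_mul, smul_add, smul_smul]
  · rw [hmI, one_smul, ← add_assoc, ← add_smul, ← C_add]
    simp
  · rw [hI, hmI, mul_neg_one, map_neg, neg_neg, one_smul, one_smul, neg_one_smul]
    abel
  · rw [hI, neg_one_smul]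
    abel

/-! ### Main theorem -/

theorem PH_hessian_nilpotent_iff {n : ℕ} (H : Fin n → MvPolynomial (Fin n) ℂ) :
    IsNilpotent (hess (PH H)) ↔
      IsNilpotent (Matrix.of fun i j : Fin n => pderiv j (H i)) := by
  rw [← conj_eq H, isNilpotent_conj_iff _ _ _ (TmTm' n) (Tm'Tm n), Nm,
    isNilpotent_fromBlocks_iff,
    isNilpotent_unit_smul_iff (C Complex.I) (C (-Complex.I))
      (by rw [← C_mul]; simp) ((Bmat H)ᵀ),
    isNilpotent_unit_smul_iff (C Complex.I) (C (-Complex.I))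
      (by rw [← C_mul]; simp) (Bmat H),
    _root_.isNilpotent_transpose_iff, and_self]
  have hB : Bmat H = (Matrix.of fun i j : Fin n => pderiv j (H i)).map (emb n).toRingHom := by
    ext i j
    simp [Bmat, Matrix.map_apply]
  rw [hB, isNilpotent_map_iff _ (by simpa using emb_injective n)]
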